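/- If h_{⟨1⟩⟨1⟩⟨1⟩⟨1⟩}(n) is defined then h_{⟨1⟩⟨1⟩⟨1⟩⟨1⟩}(n) > 2^n_n (the n-fold iterated exponential of n), and h_{⟨1⟩⟨1⟩⟨1⟩}(n) > 2^n. -/

import Mathlib

/-- The `α`-head of a worm: maximal initial segment of modalities `≥ α`. -/
noncomputable def headW (α : Ordinal) : List Ordinal → List Ordinal
  | [] => []
  | β :: A => if β < α then [] else β :: headW α A

/-- The `α`-remainder of a worm: what is left after removing the `α`-head. -/
noncomputable def remW (α : Ordinal) : List Ordinal → List Ordinal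
  | [] => []
  | β :: A => if β < α then β :: A else remW α A

open Classical in
/-- The step-down function on worms, relative to an assignment `fs` of
fundamental sequences to limit ordinals:  `⊤⟦k⟧ = ⊤`, `(0A)⟦k⟧ = A`,
`(⟨α+1⟩B)⟦k⟧ = (⟨α⟩h_{α+1}(B))^{k+1} r_{α+1}(B)` and `(⟨λ⟩B)⟦k⟧ = ⟨λ[k]⟩B`. -/
noncomputable def stepDown (fs : Ordinal → ℕ → Ordinal) : List Ordinal → ℕ → List Ordinal
  | [], _ => []
  | α :: B, k =>
    if α = 0 then B
    else if Order.IsSuccLimit α then fs α k :: B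
    else (List.replicate (k + 1) (Ordinal.pred α :: headW α B)).flatten ++ remW α B

/-- `iterStep fs A m k = A⟦m⟧⟦m+1⟧⋯⟦m+k⟧`. -/
noncomputable def iterStep (fs : Ordinal → ℕ → Ordinal) (A : List Ordinal) (m : ℕ) : ℕ → List Ordinal
  | 0 => stepDown fs A m
  | k + 1 => stepDown fs (iterStep fs A m k) (m + k + 1)

/-- `h_A(m)` is defined, i.e. some `A⟦m⟧⟦m+1⟧⋯⟦m+k⟧` equals `⊤`. -/
def Dies (fs : Ordinal → ℕ → Ordinal) (A : List Ordinal) (m : ℕ) : Prop :=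
  ∃ k, iterStep fs A m k = []

/-- The worm-Hardy function: `h_A(m)` is the least `k` with
`A⟦m⟧⟦m+1⟧⋯⟦m+k⟧ = ⊤`. -/
noncomputable def hW (fs : Ordinal → ℕ → Ordinal) (A : List Ordinal) (m : ℕ) : ℕ :=
  sInf {k | iterStep fs A m k = []}


def superexp (x : ℕ) : ℕ → ℕ
  | 0 => x
  | n + 1 => 2 ^ superexp x n

/-! Basic ordinal facts -/

lemma not_isLimit_one : ¬ Order.IsSuccLimit (1 : Ordinal) := by
  have : (1:Ordinal) = Order.succ 0 := by simp
  rw [this]; exact Order.not_isSuccLimit_succ 0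

lemma pred_one : Ordinal.pred 1 = 0 := by
  have : (1:Ordinal) = Order.succ 0 := by simp
  rw [this, Ordinal.pred_succ]

/-! stepDown equations -/

variable {fs : Ordinal → ℕ → Ordinal}

lemma stepDown_nil (k : ℕ) : stepDown fs [] k = [] := rfl

lemma stepDown_zero (B : List Ordinal) (k : ℕ) : stepDown fs ((0:Ordinal) :: B) k = B := by
  simp [stepDown]

lemma stepDown_one (B : List Ordinal) (k : ℕ) :
    stepDown fs ((1:Ordinal) :: B) k
      = (List.replicate (k + 1) ((0:Ordinal) :: headW 1 B)).flatten ++ remW 1 B := by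
  simp [stepDown, not_isLimit_one, pred_one]

/-! entries 0/1 -/

def E (A : List Ordinal) : Prop := ∀ a ∈ A, a = 0 ∨ a = 1

lemma E_nil : E [] := by intro a h; simp at h

lemma E_cons {b : Ordinal} {B : List Ordinal} (hb : b = 0 ∨ b = 1) (hB : E B) : E (b :: B) := by
  intro a h; rcases List.mem_cons.1 h with h | h
  · exact h ▸ hb
  · exact hB a h

lemma E_tail {b : Ordinal} {B : List Ordinal} (h : E (b :: B)) : E B :=
  fun a ha => h a (List.mem_cons_of_mem _ ha)

lemma E_append {A B : List Ordinal} (hA : E A) (hB : E B) : E (A ++ B) := by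
  intro a ha; rcases List.mem_append.1 ha with h | h
  · exact hA a h
  · exact hB a h

/-! headW / remW lemmas -/

lemma headW_nil (α : Ordinal) : headW α [] = [] := rfl
lemma remW_nil (α : Ordinal) : remW α [] = [] := rfl

lemma headW_cons_zero (B : List Ordinal) : headW 1 ((0:Ordinal) :: B) = [] := by
  simp [headW, zero_lt_one]

lemma remW_cons_zero (B : List Ordinal) : remW 1 ((0:Ordinal) :: B) = (0:Ordinal) :: B := by
  simp [remW, zero_lt_one]

lemma headW_cons_one (B : List Ordinal) : headW 1 ((1:Ordinal) :: B) = 1 :: headW 1 B := by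
  simp [headW]

lemma remW_cons_one (B : List Ordinal) : remW 1 ((1:Ordinal) :: B) = remW 1 B := by
  simp [remW]

lemma headW_append0 {B : List Ordinal} (hB : E B) (D : List Ordinal) :
    headW 1 (B ++ (0:Ordinal) :: D) = headW 1 B := by
  induction B with
  | nil => simpa [headW_nil] using headW_cons_zero D
  | cons b B ih =>
    rcases hB b (by simp) with h | h <;> subst h
    · simp [headW_cons_zero]
    · simp only [List.cons_append, headW_cons_one, ih (E_tail hB)]

lemma remW_append0 {B : List Ordinal} (hB : E B) (D : List Ordinal) :
    remW 1 (B ++ (0:Ordinal) :: D) = remW 1 B ++ (0:Ordinal) :: D := by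
  induction B with
  | nil => simp [remW_cons_zero, remW_nil]
  | cons b B ih =>
    rcases hB b (by simp) with h | h <;> subst h
    · simp [remW_cons_zero]
    · simp only [List.cons_append, remW_cons_one, ih (E_tail hB)]

lemma headW_all_one {B : List Ordinal} (hB : E B) : ∀ x ∈ headW 1 B, x = (1:Ordinal) := by
  induction B with
  | nil => simp [headW_nil]
  | cons b B ih =>
    rcases hB b (by simp) with h | h <;> subst h
    · simp [headW_cons_zero]
    · rw [headW_cons_one]
      intro x hx
      rcases List.mem_cons.1 hx with h | h
      · exact h
      · exact ih (E_tail hB) x h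

lemma E_headW {B : List Ordinal} (hB : E B) : E (headW 1 B) :=
  fun a ha => Or.inr (headW_all_one hB a ha)

lemma remW_shape {B : List Ordinal} (hB : E B) :
    remW 1 B = [] ∨ ∃ C, remW 1 B = (0:Ordinal) :: C := by
  induction B with
  | nil => exact Or.inl rfl
  | cons b B ih =>
    rcases hB b (by simp) with h | h <;> subst h
    · exact Or.inr ⟨B, remW_cons_zero B⟩
    · rw [remW_cons_one]; exact ih (E_tail hB)

lemma E_remW {B : List Ordinal} (hB : E B) : E (remW 1 B) := by
  induction B with
  | nil => exact E_nil
  | cons b B ih =>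
    rcases hB b (by simp) with h | h <;> subst h
    · rw [remW_cons_zero]; exact hB
    · rw [remW_cons_one]; exact ih (E_tail hB)

lemma remW_length (B : List Ordinal) : (remW 1 B).length ≤ B.length := by
  induction B with
  | nil => simp [remW_nil]
  | cons b B ih =>
    by_cases h : b < 1
    · simp [remW, h]
    · simp only [remW, if_neg h]; exact le_trans ih (by simp)

lemma headW_ones_append {X : List Ordinal} (hX : headW 1 X = []) (a : ℕ) :
    headW 1 (List.replicate a (1:Ordinal) ++ X) = List.replicate a (1:Ordinal) := by
  induction a with
  | zero => simpa using hX
  | succ a ih => simp [List.replicate_succ, headW_cons_one, ih]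

lemma remW_ones_append (X : List Ordinal) (a : ℕ) :
    remW 1 (List.replicate a (1:Ordinal) ++ X) = remW 1 X := by
  induction a with
  | zero => simp
  | succ a ih => simp [List.replicate_succ, remW_cons_one, ih]

lemma headW_eq_replicate {B : List Ordinal} (hB : E B) :
    headW 1 B = List.replicate (headW 1 B).length (1:Ordinal) :=
  List.eq_replicate_of_mem (headW_all_one hB)

/-! ordinal measure -/

open Ordinal

universe u

noncomputable def oW : List Ordinal.{u} → Ordinal.{u}
  | [] => 0
  | b :: B =>
    if b = 0 then oW B + 1
    else oW (remW 1 B) + omega0 ^ (((headW 1 B).length + 1 : ℕ) : Ordinal)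
termination_by A => A.length
decreasing_by
  · simp
  · exact Nat.lt_succ_of_le (remW_length _)

lemma oW_nil : oW [] = 0 := by simp [oW]

lemma oW_cons_zero (B : List Ordinal) : oW ((0:Ordinal) :: B) = oW B + 1 := by
  simp [oW]

lemma oW_cons_one (B : List Ordinal) :
    oW ((1:Ordinal) :: B)
      = oW (remW 1 B) + omega0 ^ (((headW 1 B).length + 1 : ℕ) : Ordinal) := by
  rw [oW]; simp

lemma oW_ones_append {X : List Ordinal} (hh : headW 1 X = []) (hr : remW 1 X = X) (a : ℕ) :
    oW (List.replicate a (1:Ordinal) ++ X) ≤ oW X + omega0 ^ (a : Ordinal) := by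
  cases a with
  | zero =>
    rw [List.replicate_zero, List.nil_append]
    exact le_self_add
  | succ a =>
    rw [List.replicate_succ, List.cons_append, oW_cons_one,
      headW_ones_append hh, remW_ones_append, hr, List.length_replicate]

lemma zero_cond (C : List Ordinal) :
    headW 1 ((0:Ordinal) :: C) = [] ∧ remW 1 ((0:Ordinal) :: C) = (0:Ordinal) :: C :=
  ⟨headW_cons_zero C, remW_cons_zero C⟩

lemma oW_block_bound {R : List Ordinal} (hh : headW 1 R = []) (hr : remW 1 R = R) (a : ℕ) :
    ∀ j : ℕ, oW ((List.replicate j ((0:Ordinal) :: List.replicate a 1)).flatten ++ R)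
      ≤ oW R + (omega0 ^ (a : Ordinal) + 1) * (j : Ordinal) := by
  intro j
  induction j with
  | zero => simp
  | succ j ih =>
    rw [List.replicate_succ, List.flatten_cons, List.append_assoc, List.cons_append,
      oW_cons_zero]
    set Z := (List.replicate j ((0:Ordinal) :: List.replicate a 1)).flatten ++ R with hZ
    have hcond : headW 1 Z = [] ∧ remW 1 Z = Z := by
      cases j with
      | zero => simpa [hZ] using ⟨hh, hr⟩
      | succ j =>
        rw [hZ, List.replicate_succ, List.flatten_cons, List.append_assoc, List.cons_append]
        exact zero_cond _
    have h1 : oW (List.replicate a (1:Ordinal) ++ Z) ≤ oW Z + omega0 ^ (a : Ordinal) :=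
      oW_ones_append hcond.1 hcond.2 a
    calc oW (List.replicate a (1:Ordinal) ++ Z) + 1
        ≤ (oW Z + omega0 ^ (a : Ordinal)) + 1 := add_le_add_left h1 1
      _ = oW Z + (omega0 ^ (a : Ordinal) + 1) := by rw [add_assoc]
      _ ≤ (oW R + (omega0 ^ (a : Ordinal) + 1) * (j : Ordinal)) + (omega0 ^ (a : Ordinal) + 1) :=
          add_le_add_left ih _
      _ = oW R + (omega0 ^ (a : Ordinal) + 1) * ((j+1 : ℕ) : Ordinal) := by
          push_cast
          rw [mul_add, mul_one, add_assoc]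

lemma aux_lt_omega_pow (a k : ℕ) :
    (omega0 ^ (a : Ordinal) + 1) * ((k+1 : ℕ) : Ordinal) < omega0 ^ ((a+1 : ℕ) : Ordinal) := by
  have h1 : omega0 ^ (a : Ordinal) + 1 ≤ omega0 ^ (a : Ordinal) * 2 := by
    have h2 : (2:Ordinal) = 1 + 1 := one_add_one_eq_two.symm
    rw [h2, mul_add, mul_one]
    exact add_le_add_right (Order.one_le_iff_pos.2 (opow_pos _ omega0_pos)) _
  have h2 : (omega0 ^ (a : Ordinal) + 1) * ((k+1 : ℕ) : Ordinal)
      ≤ omega0 ^ (a : Ordinal) * (2 * ((k+1:ℕ) : Ordinal)) := by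
    rw [← mul_assoc]
    exact mul_le_mul_left h1 _
  refine lt_of_le_of_lt h2 ?_
  have h3 : ((a+1 : ℕ) : Ordinal) = (a : Ordinal) + 1 := by push_cast; ring
  rw [h3, opow_add, opow_one]
  apply (mul_lt_mul_iff_right₀ (opow_pos _ omega0_pos)).2
  have h4 : (2 : Ordinal) * ((k+1:ℕ) : Ordinal) = ((2 * (k+1) : ℕ) : Ordinal) := by
    push_cast; ring
  rw [h4]
  exact nat_lt_omega0 _

lemma oW_step_lt (fs : Ordinal → ℕ → Ordinal) {A : List Ordinal} (hE : E A) (hne : A ≠ [])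
    (c : ℕ) : oW (stepDown fs A c) < oW A := by
  cases A with
  | nil => exact absurd rfl hne
  | cons b B =>
    rcases hE b (by simp) with h | h <;> subst h
    · rw [stepDown_zero, oW_cons_zero]
      exact lt_add_one _
    · rw [stepDown_one, oW_cons_one]
      set a := (headW 1 B).length with ha
      have hB : E B := E_tail hE
      have hrep : headW 1 B = List.replicate a (1:Ordinal) := headW_eq_replicate hB
      have hcond : headW 1 (remW 1 B) = [] ∧ remW 1 (remW 1 B) = remW 1 B := by
        rcases remW_shape hB with h | ⟨C, h⟩
        · rw [h]; exact ⟨rfl, rfl⟩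
        · rw [h]; exact zero_cond C
      have hb := oW_block_bound hcond.1 hcond.2 a (c+1)
      rw [← hrep] at hb
      exact lt_of_le_of_lt hb (add_lt_add_right (aux_lt_omega_pow a c) _)

/-! termination -/

lemma iterStep_shift (fs : Ordinal → ℕ → Ordinal) (A : List Ordinal) (m : ℕ) (k : ℕ) :
    iterStep fs A m (k+1) = iterStep fs (stepDown fs A m) (m+1) k := by
  induction k with
  | zero => simp [iterStep]
  | succ k ih =>
    show stepDown fs (iterStep fs A m (k+1)) (m + (k+1) + 1) = _
    rw [ih]
    show _ = stepDown fs (iterStep fs (stepDown fs A m) (m+1) k) ((m+1) + k + 1)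
    congr 1
    omega

lemma E_stepDown (fs : Ordinal → ℕ → Ordinal) {A : List Ordinal} (hE : E A) (c : ℕ) :
    E (stepDown fs A c) := by
  cases A with
  | nil => exact E_nil
  | cons b B =>
    rcases hE b (by simp) with h | h <;> subst h
    · rw [stepDown_zero]; exact E_tail hE
    · rw [stepDown_one]
      refine E_append ?_ (E_remW (E_tail hE))
      intro x hx
      rcases List.mem_flatten.1 hx with ⟨l, hl, hxl⟩
      rcases List.eq_of_mem_replicate hl with rfl
      rcases List.mem_cons.1 hxl with h | h
      · exact Or.inl h
      · exact Or.inr (headW_all_one (E_tail hE) x h)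

lemma dies_nil (fs : Ordinal → ℕ → Ordinal) (m : ℕ) : Dies fs [] m := ⟨0, rfl⟩

lemma diesAll (fs : Ordinal → ℕ → Ordinal) :
    ∀ (A : List Ordinal), E A → ∀ m, Dies fs A m := by
  have main : ∀ o : Ordinal, ∀ A : List Ordinal, E A → oW A = o → ∀ m, Dies fs A m := by
    intro o
    induction o using Ordinal.induction with
    | h o IH =>
      intro A hE ho m
      cases A with
      | nil => exact dies_nil fs m
      | cons b B =>
        have hne : (b :: B) ≠ [] := by simp
        have hlt : oW (stepDown fs (b :: B) m) < o := ho ▸ oW_step_lt fs hE hne m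
        obtain ⟨k, hk⟩ := IH _ hlt (stepDown fs (b::B) m) (E_stepDown fs hE m) rfl (m+1)
        exact ⟨k+1, by rw [iterStep_shift]; exact hk⟩
  exact fun A hE m => main (oW A) A hE rfl m

/-! hW machinery -/

lemma iterStep_nil (fs : Ordinal → ℕ → Ordinal) (m k : ℕ) : iterStep fs [] m k = [] := by
  induction k with
  | zero => rfl
  | succ k ih => show stepDown fs (iterStep fs [] m k) _ = []; rw [ih]; rfl

lemma hW_nil (fs : Ordinal → ℕ → Ordinal) (m : ℕ) : hW fs [] m = 0 := by
  unfold hW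
  rw [Nat.sInf_eq_zero]
  exact Or.inl (iterStep_nil fs m 0)

lemma iterStep_zero' (fs : Ordinal → ℕ → Ordinal) (A : List Ordinal) (m : ℕ) :
    iterStep fs A m 0 = stepDown fs A m := rfl

lemma hW_mem (fs : Ordinal → ℕ → Ordinal) {A : List Ordinal} {m : ℕ} (h : Dies fs A m) :
    iterStep fs A m (hW fs A m) = [] := Nat.sInf_mem h

lemma hW_min (fs : Ordinal → ℕ → Ordinal) {A : List Ordinal} {m j : ℕ}
    (h : j < hW fs A m) : iterStep fs A m j ≠ [] :=
  Nat.notMem_of_lt_sInf h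

lemma hW_step (fs : Ordinal → ℕ → Ordinal) {A : List Ordinal} {m : ℕ} (hd : Dies fs A m)
    (hne : stepDown fs A m ≠ []) :
    hW fs A m = hW fs (stepDown fs A m) (m+1) + 1 := by
  have hd' : Dies fs (stepDown fs A m) (m+1) := by
    obtain ⟨k, hk⟩ := hd
    cases k with
    | zero => exact absurd hk hne
    | succ k => exact ⟨k, by rw [← iterStep_shift]; exact hk⟩
  set j := hW fs (stepDown fs A m) (m+1) with hj
  have hmem : iterStep fs A m (j+1) = [] := by
    rw [iterStep_shift]; exact hW_mem fs hd'
  refine le_antisymm (Nat.sInf_le hmem) ?_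
  by_contra hc
  push_neg at hc
  have hmem2 := hW_mem fs hd
  rcases Nat.lt_succ_iff_lt_or_eq.1 hc with hlt | heq
  · cases hEq : hW fs A m with
    | zero =>
      rw [hEq] at hmem2
      exact hne hmem2
    | succ i =>
      rw [hEq] at hmem2 hlt
      rw [iterStep_shift] at hmem2
      exact hW_min fs (by omega : i < j) hmem2
  · cases hEq : hW fs A m with
    | zero => rw [hEq] at hmem2; exact hne hmem2
    | succ i =>
      rw [hEq] at heq hmem2
      rw [iterStep_shift] at hmem2
      exact hW_min fs (by omega : i < j) hmem2

lemma iterStep_add (fs : Ordinal → ℕ → Ordinal) {A Y : List Ordinal} {m t : ℕ}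
    (h : iterStep fs A m t = Y) (j : ℕ) :
    iterStep fs A m (t + 1 + j) = iterStep fs Y (m + t + 1) j := by
  induction j with
  | zero =>
    show stepDown fs (iterStep fs A m (t + 0)) (m + (t+0) + 1) = stepDown fs Y (m + t + 1)
    rw [Nat.add_zero, h]
  | succ j ih =>
    show stepDown fs (iterStep fs A m (t+1+j)) (m + (t+1+j) + 1) = _
    rw [ih]
    show _ = stepDown fs (iterStep fs Y (m+t+1) j) ((m+t+1) + j + 1)
    congr 1
    omega

/-! concatenation -/

lemma stepDown_append0 (fs : Ordinal → ℕ → Ordinal) {A : List Ordinal} (hE : E A)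
    (hne : A ≠ []) (D : List Ordinal) (c : ℕ) :
    stepDown fs (A ++ (0:Ordinal) :: D) c = stepDown fs A c ++ (0:Ordinal) :: D := by
  cases A with
  | nil => exact absurd rfl hne
  | cons b B =>
    rcases hE b (by simp) with h | h <;> subst h
    · rw [List.cons_append, stepDown_zero, stepDown_zero]
    · rw [List.cons_append, stepDown_one, stepDown_one,
        headW_append0 (E_tail hE), remW_append0 (E_tail hE), List.append_assoc]

lemma E_iterStep (fs : Ordinal → ℕ → Ordinal) {A : List Ordinal} (hE : E A) (m : ℕ) :
    ∀ k, E (iterStep fs A m k) := by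
  intro k
  induction k with
  | zero => exact E_stepDown fs hE m
  | succ k ih => exact E_stepDown fs ih _

lemma traj_append (fs : Ordinal → ℕ → Ordinal) {A : List Ordinal} (hE : E A) (hne : A ≠ [])
    (D : List Ordinal) (m : ℕ) :
    ∀ k, (∀ j < k, iterStep fs A m j ≠ []) →
      iterStep fs (A ++ (0:Ordinal) :: D) m k = iterStep fs A m k ++ (0:Ordinal) :: D := by
  intro k
  induction k with
  | zero =>
    intro _
    rw [iterStep_zero', iterStep_zero', stepDown_append0 fs hE hne]
  | succ k ih =>
    intro hj
    show stepDown fs (iterStep fs (A ++ (0:Ordinal) :: D) m k) (m + k + 1) = _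
    rw [ih (fun j hjk => hj j (Nat.lt_succ_of_lt hjk))]
    rw [stepDown_append0 fs (E_iterStep fs hE m k) (hj k (Nat.lt_succ_self k))]
    rfl

lemma split_bound (fs : Ordinal → ℕ → Ordinal) {A D : List Ordinal} (hEA : E A) (hED : E D)
    (hne : A ≠ []) (m : ℕ) :
    hW fs A m + 1 + hW fs D (m + hW fs A m + 2) ≤ hW fs (A ++ (0:Ordinal) :: D) m := by
  have hdA : Dies fs A m := diesAll fs A hEA m
  set T := hW fs A m with hT
  set U := hW fs D (m + T + 2) with hU
  -- trajectory facts
  have h1 : iterStep fs (A ++ (0:Ordinal) :: D) m T = (0:Ordinal) :: D := by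
    rw [traj_append fs hEA hne D m T (fun j hj => hW_min fs hj), hW_mem fs hdA]
    rfl
  have h2 : iterStep fs (A ++ (0:Ordinal) :: D) m (T + 1 + 0) = D := by
    rw [iterStep_add fs h1 0, iterStep_zero', stepDown_zero]
  have h3 : ∀ j, iterStep fs (A ++ (0:Ordinal) :: D) m (T + 2 + j)
      = iterStep fs D (m + T + 2) j := by
    intro j
    have := iterStep_add fs h2 j
    have harith : T + 1 + 0 + 1 + j = T + 2 + j := by omega
    have harith2 : m + (T + 1 + 0) + 1 = m + T + 2 := by omega
    rw [harith, harith2] at this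
    exact this
  -- the combined worm dies
  have hdC : Dies fs (A ++ (0:Ordinal) :: D) m :=
    diesAll fs _ (E_append hEA (E_cons (Or.inl rfl) hED)) m
  have hmem := hW_mem fs hdC
  set K := hW fs (A ++ (0:Ordinal) :: D) m with hK
  -- K > T
  have hKT : T + 1 ≤ K := by
    by_contra hc
    push_neg at hc
    rcases Nat.lt_succ_iff_lt_or_eq.1 hc with hlt | heq
    · have := traj_append fs hEA hne D m K (fun j hj => hW_min fs (lt_trans hj hlt))
      rw [hmem] at this
      exact List.append_ne_nil_of_right_ne_nil _ (List.cons_ne_nil _ _) this.symm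
    · rw [heq] at hmem
      rw [h1] at hmem
      exact List.cons_ne_nil _ _ hmem
  rcases Nat.lt_or_ge K (T + 2) with hlt | hge
  · -- K = T + 1, so D = []
    have hKeq : K = T + 1 := by omega
    rw [hKeq] at hmem
    have hD : D = [] := by
      have := h2
      rw [show T + 1 + 0 = T + 1 by omega] at this
      rw [this] at hmem
      exact hmem
    have hU0 : U = 0 := by
      rw [hU, hD, hW_nil]
    omega
  · obtain ⟨j, hj⟩ : ∃ j, K = T + 2 + j := ⟨K - (T+2), by omega⟩
    rw [hj] at hmem
    rw [h3 j] at hmem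
    have : U ≤ j := Nat.sInf_le hmem
    omega

/-! concrete worms -/

noncomputable def Q (W : List Ordinal) (i : ℕ) : List Ordinal :=
  W ++ (List.replicate i ((0:Ordinal) :: W)).flatten

lemma Q_zero (W : List Ordinal) : Q W 0 = W := by simp [Q]

lemma Q_succ (W : List Ordinal) (i : ℕ) :
    Q W (i+1) = W ++ (0:Ordinal) :: Q W i := by
  simp [Q, List.replicate_succ]

lemma E_Q {W : List Ordinal} (hW : E W) (i : ℕ) : E (Q W i) := by
  refine E_append hW ?_
  intro x hx
  rcases List.mem_flatten.1 hx with ⟨l, hl, hxl⟩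
  rcases List.eq_of_mem_replicate hl with rfl
  rcases List.mem_cons.1 hxl with h | h
  · exact Or.inl h
  · exact hW x h

lemma Q_ne_nil {W : List Ordinal} (hne : W ≠ []) (i : ℕ) : Q W i ≠ [] := by
  simp [Q, hne]

lemma headW_ones {W : List Ordinal} (h : ∀ x ∈ W, x = (1:Ordinal)) : headW 1 W = W := by
  have := headW_ones_append (X := []) rfl W.length
  rw [List.append_nil] at this
  rw [List.eq_replicate_of_mem h] at this ⊢
  simpa using this

lemma remW_ones {W : List Ordinal} (h : ∀ x ∈ W, x = (1:Ordinal)) : remW 1 W = [] := by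
  have := remW_ones_append [] W.length
  rw [List.append_nil] at this
  rw [List.eq_replicate_of_mem h]
  simpa [remW_nil] using this

lemma stepDown_ones (fs : Ordinal → ℕ → Ordinal) {W : List Ordinal}
    (h : ∀ x ∈ W, x = (1:Ordinal)) (c : ℕ) :
    stepDown fs ((1:Ordinal) :: W) c = (0:Ordinal) :: Q W c := by
  rw [stepDown_one, headW_ones h, remW_ones h, List.append_nil, List.replicate_succ,
    List.flatten_cons, Q]
  rfl

lemma hW_lift (fs : Ordinal → ℕ → Ordinal) {W : List Ordinal} (hE : E W)
    (h1 : ∀ x ∈ W, x = (1:Ordinal)) (hne : W ≠ []) (c : ℕ) :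
    hW fs ((1:Ordinal) :: W) c = hW fs (Q W c) (c+2) + 2 := by
  have hE1 : E ((1:Ordinal) :: W) := E_cons (Or.inr rfl) hE
  have step1 := hW_step fs (diesAll fs _ hE1 c)
    (by rw [stepDown_ones fs h1]; exact List.cons_ne_nil _ _)
  rw [stepDown_ones fs h1] at step1
  have hE0 : E ((0:Ordinal) :: Q W c) := E_cons (Or.inl rfl) (E_Q hE c)
  have step2 := hW_step fs (diesAll fs _ hE0 (c+1))
    (by rw [stepDown_zero]; exact Q_ne_nil hne c)
  rw [stepDown_zero] at step2
  rw [step1, step2]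

lemma hW_zeros (fs : Ordinal → ℕ → Ordinal) :
    ∀ i c, hW fs (List.replicate (i+1) (0:Ordinal)) c = i := by
  intro i
  induction i with
  | zero =>
    intro c
    unfold hW
    rw [Nat.sInf_eq_zero]
    left
    show iterStep fs (List.replicate (0+1) (0:Ordinal)) c 0 = []
    rw [iterStep_zero', List.replicate_succ, stepDown_zero, List.replicate_zero]
  | succ i ih =>
    intro c
    have hE : E (List.replicate (i+1+1) (0:Ordinal)) := by
      intro x hx; exact Or.inl (List.eq_of_mem_replicate hx)
    have hne : stepDown fs (List.replicate (i+1+1) (0:Ordinal)) c ≠ [] := by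
      rw [List.replicate_succ, stepDown_zero]
      simp
    have h := hW_step fs (diesAll fs _ hE c) hne
    rw [List.replicate_succ, stepDown_zero] at h
    rw [List.replicate_succ, h, ih]

lemma flatten_replicate_singleton (n : ℕ) (x : Ordinal) :
    (List.replicate n [x]).flatten = List.replicate n x := by
  induction n with
  | zero => simp
  | succ n ih => simp [List.replicate_succ, ih]

lemma E_w1 : E [(1:Ordinal)] := E_cons (Or.inr rfl) E_nil
lemma E_w2 : E [(1:Ordinal), 1] := E_cons (Or.inr rfl) E_w1
lemma E_w3 : E [(1:Ordinal), 1, 1] := E_cons (Or.inr rfl) E_w2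

lemma ones_w1 : ∀ x ∈ [(1:Ordinal)], x = (1:Ordinal) := by simp
lemma ones_w2 : ∀ x ∈ [(1:Ordinal), 1], x = (1:Ordinal) := by simp
lemma ones_w3 : ∀ x ∈ [(1:Ordinal), 1, 1], x = (1:Ordinal) := by simp

lemma hW_w1 (fs : Ordinal → ℕ → Ordinal) (c : ℕ) : hW fs [(1:Ordinal)] c = c + 1 := by
  have hne : stepDown fs [(1:Ordinal)] c ≠ [] := by
    rw [stepDown_one]
    simp [List.replicate_succ]
  have h := hW_step fs (diesAll fs _ E_w1 c) hne
  rw [stepDown_one] at h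
  have : headW 1 ([] : List Ordinal) = [] := rfl
  rw [this] at h
  have : remW 1 ([] : List Ordinal) = [] := rfl
  rw [this, List.append_nil, flatten_replicate_singleton] at h
  rw [h, hW_zeros]

lemma bQ1 (fs : Ordinal → ℕ → Ordinal) : ∀ i c, 2^i * (c+1) ≤ hW fs (Q [(1:Ordinal)] i) c := by
  intro i
  induction i with
  | zero =>
    intro c
    rw [Q_zero, hW_w1]
    simp
  | succ i ih =>
    intro c
    have hs := split_bound fs E_w1 (E_Q E_w1 i) (by simp) c
    rw [← Q_succ] at hs
    rw [hW_w1] at hs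
    have hI := ih (c + (c+1) + 2)
    have h2 : 2^i * (c + (c+1) + 2 + 1) = 2^i * (2*(c+2)) := by ring_nf
    calc (2^(i+1) : ℕ) * (c+1) ≤ 2^(i+1) * (c+2) := by
          exact Nat.mul_le_mul_left _ (by omega)
      _ = 2^i * (2*(c+2)) := by ring
      _ ≤ hW fs (Q [(1:Ordinal)] i) (c + (c+1) + 2) := by rw [← h2]; exact hI
      _ ≤ c + 1 + 1 + hW fs (Q [(1:Ordinal)] i) (c + (c+1) + 2) := by omega
      _ ≤ hW fs (Q [(1:Ordinal)] (i+1)) c := hs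

lemma b2 (fs : Ordinal → ℕ → Ordinal) (c : ℕ) : 2^(c+1) ≤ hW fs [(1:Ordinal), 1] c := by
  have h := hW_lift fs E_w1 ones_w1 (by simp) c
  have hb := bQ1 fs c (c+2)
  have h1 : (2:ℕ)^(c+1) ≤ 2^c * (c+2+1) := by
    have he : (2:ℕ)^(c+1) = 2^c * 2 := by ring
    rw [he]
    exact Nat.mul_le_mul (le_refl (2^c)) (show 2 ≤ c+2+1 by omega)
  rw [h]
  exact le_trans (le_trans h1 hb) (Nat.le_add_right _ 2)

lemma bQ2 (fs : Ordinal → ℕ → Ordinal) : ∀ i c, 2^(c+1) ≤ hW fs (Q [(1:Ordinal), 1] i) c := by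
  intro i
  induction i with
  | zero =>
    intro c
    rw [Q_zero]
    exact b2 fs c
  | succ i ih =>
    intro c
    have hs := split_bound fs E_w2 (E_Q E_w2 i) (by simp) c
    rw [← Q_succ] at hs
    have := b2 fs c
    omega

lemma b3 (fs : Ordinal → ℕ → Ordinal) (c : ℕ) : 2^(c+3) + 2 ≤ hW fs [(1:Ordinal), 1, 1] c := by
  have h := hW_lift fs E_w2 ones_w2 (by simp) c
  have hb := bQ2 fs c (c+2)
  have he : c + 2 + 1 = c + 3 := by omega
  rw [he] at hb
  omega

lemma superexp_mono {x y : ℕ} (h : x ≤ y) : ∀ i, superexp x i ≤ superexp y i := by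
  intro i
  induction i with
  | zero => exact h
  | succ i ih => exact Nat.pow_le_pow_right (by omega) ih

lemma superexp_pow (x : ℕ) : ∀ i, superexp (2^x) i = superexp x (i+1) := by
  intro i
  induction i with
  | zero => rfl
  | succ i ih => show 2 ^ superexp (2^x) i = 2 ^ superexp x (i+1); rw [ih]

lemma bQ3 (fs : Ordinal → ℕ → Ordinal) :
    ∀ i c, superexp c i ≤ hW fs (Q [(1:Ordinal), 1, 1] i) c := by
  intro i
  induction i with
  | zero =>
    intro c
    rw [Q_zero]
    have := b3 fs c
    have hc : c < 2^c := Nat.lt_two_pow_self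
    have : (2:ℕ)^c ≤ 2^(c+3) := Nat.pow_le_pow_right (by omega) (by omega)
    show c ≤ _
    omega
  | succ i ih =>
    intro c
    have hs := split_bound fs E_w3 (E_Q E_w3 i) (by simp) c
    rw [← Q_succ] at hs
    set T := hW fs [(1:Ordinal), 1, 1] c with hT
    have hTb : 2^(c+3) + 2 ≤ T := b3 fs c
    have hI := ih (c + T + 2)
    have hc2 : (2:ℕ)^c ≤ c + T + 2 := by
      have : (2:ℕ)^c ≤ 2^(c+3) := Nat.pow_le_pow_right (by omega) (by omega)
      omega
    have hm : superexp (2^c) i ≤ superexp (c + T + 2) i := superexp_mono hc2 i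
    rw [superexp_pow] at hm
    omega

lemma b4 (fs : Ordinal → ℕ → Ordinal) (n : ℕ) :
    superexp (n+2) n + 2 ≤ hW fs [(1:Ordinal), 1, 1, 1] n := by
  have h := hW_lift fs E_w3 ones_w3 (by simp) n
  have hb := bQ3 fs n (n+2)
  omega


/-- If `h_{⟨1⟩⟨1⟩⟨1⟩⟨1⟩}(n)` is defined then
`h_{⟨1⟩⟨1⟩⟨1⟩⟨1⟩}(n) > 2^n_n` (the `n`-fold iterated exponential of `n`) and
`h_{⟨1⟩⟨1⟩⟨1⟩}(n) > 2^n`. -/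
theorem hW_worm_1111_superexp (fs : Ordinal → ℕ → Ordinal)
    (hfs : ∀ k, fs Ordinal.omega0 k = (k : Ordinal))
    (n : ℕ) (h : Dies fs [(1 : Ordinal), 1, 1, 1] n) :
    superexp n n < hW fs [(1 : Ordinal), 1, 1, 1] n ∧
    2 ^ n < hW fs [(1 : Ordinal), 1, 1] n := by
  constructor
  · have h4 := b4 fs n
    have hm : superexp n n ≤ superexp (n+2) n := superexp_mono (by omega) n
    omega
  · have h3 := b3 fs n
    have hp : (2:ℕ)^n ≤ 2^(n+3) := Nat.pow_le_pow_right (by omega) (by omega)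
    omega
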